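/- Let h, h̄ ∈ L²(ℝ) and let f ∈ G be an increasing bi-Lipschitz homeomorphism of ℝ with ‖f'‖_∞ ≤ C² (C ≥ 1). Then inf_{g∈G} ‖(h∘f)·f' - (h̄∘g)·g'‖_{L²} ≤ C · inf_{f̄∈G} ‖h - (h̄∘f̄)·f̄'‖_{L²}. -/

import Mathlib

open MeasureTheory ENNReal NNReal Set

/-- The relabeling group as a set of homeomorphisms of `ℝ`. -/
def RelabelGroup : Set (ℝ ≃ₜ ℝ) :=
  {f | (∃ C, LipschitzWith C (fun x => f x - x)) ∧
       BddAbove (Set.range fun x => |f x - x|) ∧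
       (∃ C, LipschitzWith C (fun x => f.symm x - x)) ∧
       BddAbove (Set.range fun x => |f.symm x - x|) ∧
       MemLp (fun x => deriv (⇑f) x - 1) 2 volume}


lemma lipschitz_image_null {K : ℝ≥0} {f : ℝ → ℝ} (hf : LipschitzWith K f)
    {s : Set ℝ} (hs : volume s = 0) : volume (f '' s) = 0 := by
  have h := hf.hausdorffMeasure_image_le (d := 1) zero_le_one s
  rw [MeasureTheory.hausdorffMeasure_real] at h
  simp only [hs, mul_zero, le_zero_iff] at h
  exact h

lemma homeo_lipschitz {f : ℝ ≃ₜ ℝ} (hf : ∃ C, LipschitzWith C (fun x => f x - x)) :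
    ∃ K : ℝ≥0, LipschitzWith K f := by
  obtain ⟨K, hK⟩ := hf
  refine ⟨K + 1, ?_⟩
  have := hK.add LipschitzWith.id
  simpa [sub_add_cancel] using this

lemma homeo_qmp (f : ℝ ≃ₜ ℝ) {K : ℝ≥0} (hK : LipschitzWith K f.symm) :
    Measure.QuasiMeasurePreserving (⇑f) (volume : Measure ℝ) volume := by
  refine ⟨f.continuous.measurable, ?_⟩
  refine Measure.AbsolutelyContinuous.mk fun s hs h0 => ?_
  rw [Measure.map_apply f.continuous.measurable hs]
  have himg : ⇑f ⁻¹' s = ⇑f.symm '' s := by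
    ext x
    constructor
    · intro hx; exact ⟨f x, hx, f.symm_apply_apply x⟩
    · rintro ⟨y, hy, rfl⟩; simpa [f.apply_symm_apply] using hy
  rw [himg]
  exact lipschitz_image_null hK h0

lemma abs_deriv_le_of_lipschitz {K : ℝ≥0} {f : ℝ → ℝ} (hf : LipschitzWith K f) (x : ℝ) :
    |deriv f x| ≤ K := by
  by_cases hd : DifferentiableAt ℝ f x
  · have h1 : ‖fderiv ℝ f x‖ ≤ K := norm_fderiv_le_of_lipschitz ℝ hf
    have h2 : deriv f x = fderiv ℝ f x 1 := (fderiv_apply_one_eq_deriv).symm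
    calc |deriv f x| = ‖(fderiv ℝ f x) 1‖ := by rw [← h2]; exact (Real.norm_eq_abs _).symm
      _ ≤ ‖fderiv ℝ f x‖ * ‖(1:ℝ)‖ := (fderiv ℝ f x).le_opNorm 1
      _ ≤ K := by simpa using h1
  · simp [deriv_zero_of_not_differentiableAt hd]


lemma cov_lintegral (f : ℝ ≃ₜ ℝ) {K K' : ℝ≥0}
    (hK : LipschitzWith K f) (hK' : LipschitzWith K' f.symm) (F : ℝ → ℝ≥0∞) :
    ∫⁻ x, ENNReal.ofReal |deriv f x| * F (f x) = ∫⁻ y, F y := by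
  set s : Set ℝ := {x | DifferentiableAt ℝ f x} with hs_def
  have hs : MeasurableSet s := measurableSet_of_differentiableAt ℝ f
  have hsc : volume sᶜ = 0 := by
    have h := hK.ae_differentiableAt (μ := volume)
    rw [ae_iff] at h
    simpa [hs_def, compl_setOf] using h
  have hderiv : ∀ x ∈ s, HasDerivWithinAt (⇑f) (deriv (⇑f) x) s x :=
    fun x hx => (hx.hasDerivAt).hasDerivWithinAt
  have hinj : InjOn (⇑f) s := f.injective.injOn
  have key := lintegral_image_eq_lintegral_abs_det_fderiv_mul volume hs
      (fun x hx => (hderiv x hx).hasFDerivWithinAt) hinj F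
  simp only [ContinuousLinearMap.det_toSpanSingleton] at key
  have h1 : volume.restrict s = volume := by
    apply Measure.restrict_eq_self_of_ae_mem
    rw [ae_iff]; exact hsc
  have h2 : volume.restrict (⇑f '' s) = volume := by
    apply Measure.restrict_eq_self_of_ae_mem
    rw [ae_iff]
    have : {x | x ∉ ⇑f '' s} = ⇑f '' sᶜ := by
      rw [Set.image_compl_eq f.bijective]; rfl
    rw [this]
    exact lipschitz_image_null hK hsc
  rw [h1, h2] at key
  exact key.symm

lemma ae_chain (f fb : ℝ ≃ₜ ℝ) {Kf Kb K' : ℝ≥0}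
    (hKf : LipschitzWith Kf f) (hKb : LipschitzWith Kb fb) (hK' : LipschitzWith K' f.symm) :
    ∀ᵐ x, deriv (⇑(f.trans fb)) x = deriv (⇑fb) (f x) * deriv (⇑f) x := by
  have h1 : ∀ᵐ x, DifferentiableAt ℝ (⇑f) x := hKf.ae_differentiableAt
  have h2 : ∀ᵐ x, DifferentiableAt ℝ (⇑fb) (f x) := by
    have hN : volume {y | ¬ DifferentiableAt ℝ (⇑fb) y} = 0 := by
      have := hKb.ae_differentiableAt (μ := volume); rwa [ae_iff] at this
    rw [ae_iff]
    have : {x | ¬ DifferentiableAt ℝ (⇑fb) (f x)} = ⇑f ⁻¹' {y | ¬ DifferentiableAt ℝ (⇑fb) y} := rfl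
    rw [this]
    have himg : ⇑f ⁻¹' {y | ¬ DifferentiableAt ℝ (⇑fb) y}
        = ⇑f.symm '' {y | ¬ DifferentiableAt ℝ (⇑fb) y} := by
      ext x
      constructor
      · intro hx; exact ⟨f x, hx, f.symm_apply_apply x⟩
      · rintro ⟨y, hy, rfl⟩; simpa [f.apply_symm_apply] using hy
    rw [himg]
    exact lipschitz_image_null hK' hN
  filter_upwards [h1, h2] with x hx1 hx2
  have : deriv (⇑fb ∘ ⇑f) x = deriv (⇑fb) (f x) * deriv (⇑f) x := deriv_comp x hx2 hx1
  exact this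


lemma coe_nnnorm_real (a : ℝ) : (‖a‖₊ : ℝ≥0∞) = ENNReal.ofReal |a| := by
  rw [← Real.norm_eq_abs, ← coe_nnnorm, ENNReal.ofReal_coe_nnreal]

lemma rpow_two_eq (x : ℝ≥0∞) : x ^ (2:ℝ) = x * x := by
  rw [show (2:ℝ) = ((2:ℕ):ℝ) by norm_num, ENNReal.rpow_natCast, sq]

lemma lintegral_comp_sq_deriv (f : ℝ ≃ₜ ℝ) {K K' : ℝ≥0}
    (hK : LipschitzWith K f) (hK' : LipschitzWith K' f.symm)
    {B : ℝ≥0∞} (hB : B ≠ ∞) (hBd : ∀ᵐ x, (‖deriv (⇑f) x‖₊ : ℝ≥0∞) ≤ B) (G : ℝ → ℝ≥0∞) :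
    ∫⁻ x, G (f x) * (‖deriv (⇑f) x‖₊ : ℝ≥0∞) ^ (2:ℝ) ≤ B * ∫⁻ y, G y := by
  calc ∫⁻ x, G (f x) * (‖deriv (⇑f) x‖₊ : ℝ≥0∞) ^ (2:ℝ)
      ≤ ∫⁻ x, B * (ENNReal.ofReal |deriv (⇑f) x| * G (f x)) := by
        apply lintegral_mono_ae
        filter_upwards [hBd] with x hx
        rw [rpow_two_eq, coe_nnnorm_real] at *
        calc G (f x) * (ENNReal.ofReal |deriv (⇑f) x| * ENNReal.ofReal |deriv (⇑f) x|)
            = (ENNReal.ofReal |deriv (⇑f) x| * G (f x)) * ENNReal.ofReal |deriv (⇑f) x| := by ring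
          _ ≤ (ENNReal.ofReal |deriv (⇑f) x| * G (f x)) * B := by exact mul_le_mul_right hx _
          _ = B * (ENNReal.ofReal |deriv (⇑f) x| * G (f x)) := by ring
    _ = B * ∫⁻ x, ENNReal.ofReal |deriv (⇑f) x| * G (f x) := lintegral_const_mul' B _ hB
    _ = B * ∫⁻ y, G y := by rw [cov_lintegral f hK hK' G]

lemma eLpNorm_two (g : ℝ → ℝ) :
    eLpNorm g 2 volume = (∫⁻ x, (‖g x‖₊ : ℝ≥0∞) ^ (2:ℝ)) ^ (1/2 : ℝ) := by
  rw [eLpNorm_eq_lintegral_rpow_enorm_toReal two_ne_zero ENNReal.ofNat_ne_top]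
  norm_num
  rfl

lemma memL2_lintegral {g : ℝ → ℝ} (hg : MemLp g 2 volume) :
    ∫⁻ x, (‖g x‖₊ : ℝ≥0∞) ^ (2:ℝ) < ∞ := by
  have h := hg.2
  rw [eLpNorm_two] at h
  exact (ENNReal.rpow_lt_top_iff_of_pos (by norm_num)).mp h


lemma trans_mem_relabel {f fb : ℝ ≃ₜ ℝ} (hf : f ∈ RelabelGroup) (hfb : fb ∈ RelabelGroup) :
    f.trans fb ∈ RelabelGroup := by
  obtain ⟨hf1, hf2, hf3, hf4, hf5⟩ := hf
  obtain ⟨hg1, hg2, hg3, hg4, hg5⟩ := hfb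
  obtain ⟨Kf, hKf⟩ := homeo_lipschitz hf1
  obtain ⟨Kfs, hKfs⟩ := homeo_lipschitz (f := f.symm) hf3
  obtain ⟨Kb, hKb⟩ := homeo_lipschitz hg1
  obtain ⟨Kbs, hKbs⟩ := homeo_lipschitz (f := fb.symm) hg3
  obtain ⟨K1, hK1⟩ := hf1
  obtain ⟨L1, hL1⟩ := hg1
  obtain ⟨K2, hK2⟩ := hf3
  obtain ⟨L2, hL2⟩ := hg3
  refine ⟨?_, ?_, ?_, ?_, ?_⟩
  · refine ⟨L1 * Kf + K1, ?_⟩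
    have h := (hL1.comp hKf).add hK1
    have heq : (fun x => ((fun y => fb y - y) ∘ ⇑f) x + (f x - x))
        = fun x => (f.trans fb) x - x := by
      ext x; simp [Homeomorph.trans_apply, Function.comp]
    rwa [heq] at h
  · obtain ⟨M1, hM1⟩ := hg2
    obtain ⟨M2, hM2⟩ := hf2
    refine ⟨M1 + M2, ?_⟩
    rintro y ⟨x, rfl⟩
    calc |(f.trans fb) x - x| = |fb (f x) - x| := by simp [Homeomorph.trans_apply]
      _ ≤ |fb (f x) - f x| + |f x - x| := abs_sub_le _ _ _
      _ ≤ M1 + M2 := add_le_add (hM1 ⟨f x, rfl⟩) (hM2 ⟨x, rfl⟩)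
  · refine ⟨K2 * Kbs + L2, ?_⟩
    have h := (hK2.comp hKbs).add hL2
    have heq : (fun x => ((fun y => f.symm y - y) ∘ ⇑fb.symm) x + (fb.symm x - x))
        = fun x => (f.trans fb).symm x - x := by
      ext x; simp [Homeomorph.trans_apply, Function.comp]
    rwa [heq] at h
  · obtain ⟨M1, hM1⟩ := hf4
    obtain ⟨M2, hM2⟩ := hg4
    refine ⟨M1 + M2, ?_⟩
    rintro y ⟨x, rfl⟩
    calc |(f.trans fb).symm x - x| = |f.symm (fb.symm x) - x| := by simp
      _ ≤ |f.symm (fb.symm x) - fb.symm x| + |fb.symm x - x| := abs_sub_le _ _ _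
      _ ≤ M1 + M2 := add_le_add (hM1 ⟨fb.symm x, rfl⟩) (hM2 ⟨x, rfl⟩)
  · -- L² condition
    have hchain := ae_chain f fb hKf hKb hKfs
    have hφ : MemLp (fun x => (deriv (⇑fb) (f x) - 1) * deriv (⇑f) x) 2 volume := by
      constructor
      · exact ((((measurable_deriv (⇑fb)).aemeasurable.comp_quasiMeasurePreserving
          (homeo_qmp f hKfs)).sub aemeasurable_const).mul
          (measurable_deriv (⇑f)).aemeasurable).aestronglyMeasurable
      · rw [eLpNorm_two]
        have hlin : ∫⁻ x, (‖(deriv (⇑fb) (f x) - 1) * deriv (⇑f) x‖₊ : ℝ≥0∞) ^ (2:ℝ)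
            ≤ (Kf : ℝ≥0∞) * ∫⁻ y, (‖deriv (⇑fb) y - 1‖₊ : ℝ≥0∞) ^ (2:ℝ) := by
          have hb : ∀ᵐ x : ℝ, (‖deriv (⇑f) x‖₊ : ℝ≥0∞) ≤ (Kf : ℝ≥0∞) := by
            filter_upwards with x
            refine ENNReal.coe_le_coe.mpr ?_
            rw [← NNReal.coe_le_coe, coe_nnnorm, Real.norm_eq_abs]
            exact abs_deriv_le_of_lipschitz hKf x
          have hmain := lintegral_comp_sq_deriv f hKf hKfs ENNReal.coe_ne_top hb
            (fun y => (‖deriv (⇑fb) y - 1‖₊ : ℝ≥0∞) ^ (2:ℝ))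
          refine le_trans (le_of_eq ?_) hmain
          congr 1 with x
          rw [← ENNReal.mul_rpow_of_nonneg _ _ (by norm_num : (0:ℝ) ≤ 2)]
          congr 2
          simp [nnnorm_mul]
        refine ENNReal.rpow_lt_top_of_nonneg (by norm_num) ?_
        exact (lt_of_le_of_lt hlin (ENNReal.mul_lt_top ENNReal.coe_lt_top
          (memL2_lintegral hg5))).ne
    have hsum := hφ.add hf5
    refine hsum.ae_eq ?_
    filter_upwards [hchain] with x hx
    simp only [Pi.add_apply]
    rw [hx]; ring


theorem relabel_L2_infimum_estimate (h hb : ℝ → ℝ)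
    (hh : MemLp h 2 volume) (hhb : MemLp hb 2 volume)
    (f : ℝ ≃ₜ ℝ) (hf : f ∈ RelabelGroup) (hfmono : StrictMono f)
    (C : ℝ) (hC : 1 ≤ C)
    (hderiv : ∀ᵐ ξ, |deriv (⇑f) ξ| ≤ C ^ 2) :
    ⨅ g ∈ RelabelGroup,
        eLpNorm (fun ξ => h (f ξ) * deriv (⇑f) ξ - hb (g ξ) * deriv (⇑g) ξ) 2 volume
      ≤ ENNReal.ofReal C *
        ⨅ fb ∈ RelabelGroup,
          eLpNorm (fun ξ => h ξ - hb (fb ξ) * deriv (⇑fb) ξ) 2 volume := by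
  obtain ⟨Kf, hKf⟩ := homeo_lipschitz hf.1
  obtain ⟨Kfs, hKfs⟩ := homeo_lipschitz (f := f.symm) hf.2.2.1
  have hC0 : (0:ℝ) < C := lt_of_lt_of_le one_pos hC
  have key : ∀ fb, fb ∈ RelabelGroup →
      (⨅ g ∈ RelabelGroup,
        eLpNorm (fun ξ => h (f ξ) * deriv (⇑f) ξ - hb (g ξ) * deriv (⇑g) ξ) 2 volume)
      ≤ ENNReal.ofReal C *
        eLpNorm (fun ξ => h ξ - hb (fb ξ) * deriv (⇑fb) ξ) 2 volume := by
    intro fb hfb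
    obtain ⟨Kb, hKb⟩ := homeo_lipschitz hfb.1
    have hg : f.trans fb ∈ RelabelGroup := trans_mem_relabel hf hfb
    refine le_trans (iInf₂_le (f.trans fb) hg) ?_
    have hchain := ae_chain f fb hKf hKb hKfs
    have hae : (fun ξ => h (f ξ) * deriv (⇑f) ξ
          - hb ((f.trans fb) ξ) * deriv (⇑(f.trans fb)) ξ)
        =ᵐ[volume] fun ξ => (h (f ξ) - hb (fb (f ξ)) * deriv (⇑fb) (f ξ)) * deriv (⇑f) ξ := by
      filter_upwards [hchain] with x hx
      rw [hx, Homeomorph.trans_apply]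
      ring
    rw [eLpNorm_congr_ae hae, eLpNorm_two, eLpNorm_two]
    set Gfn : ℝ → ℝ≥0∞ := fun y => (‖h y - hb (fb y) * deriv (⇑fb) y‖₊ : ℝ≥0∞) ^ (2:ℝ)
      with hGfn
    have hBd : ∀ᵐ x, (‖deriv (⇑f) x‖₊ : ℝ≥0∞) ≤ ENNReal.ofReal (C^2) := by
      filter_upwards [hderiv] with x hx
      rw [coe_nnnorm_real]
      exact ENNReal.ofReal_le_ofReal hx
    have hle := lintegral_comp_sq_deriv f hKf hKfs ENNReal.ofReal_ne_top hBd Gfn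
    have h1 : ∫⁻ x, (‖(h (f x) - hb (fb (f x)) * deriv (⇑fb) (f x)) * deriv (⇑f) x‖₊ : ℝ≥0∞)
          ^ (2:ℝ)
        = ∫⁻ x, Gfn (f x) * (‖deriv (⇑f) x‖₊ : ℝ≥0∞) ^ (2:ℝ) := by
      congr 1 with x
      rw [hGfn]
      rw [← ENNReal.mul_rpow_of_nonneg _ _ (by norm_num : (0:ℝ) ≤ 2)]
      congr 2
      simp [nnnorm_mul]
    rw [h1]
    calc (∫⁻ x, Gfn (f x) * (‖deriv (⇑f) x‖₊ : ℝ≥0∞) ^ (2:ℝ)) ^ (1/2:ℝ)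
        ≤ (ENNReal.ofReal (C^2) * ∫⁻ y, Gfn y) ^ (1/2:ℝ) :=
          ENNReal.rpow_le_rpow hle (by norm_num)
      _ = ENNReal.ofReal C * (∫⁻ y, Gfn y) ^ (1/2:ℝ) := by
          rw [ENNReal.mul_rpow_of_nonneg _ _ (by norm_num : (0:ℝ) ≤ 1/2)]
          congr 1
          rw [ENNReal.ofReal_rpow_of_nonneg (by positivity) (by norm_num)]
          congr 1
          rw [← Real.rpow_natCast C 2, ← Real.rpow_mul hC0.le]
          norm_num
  have h2 : ENNReal.ofReal C *
        ⨅ fb ∈ RelabelGroup, eLpNorm (fun ξ => h ξ - hb (fb ξ) * deriv (⇑fb) ξ) 2 volume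
      = ⨅ fb ∈ RelabelGroup,
          ENNReal.ofReal C * eLpNorm (fun ξ => h ξ - hb (fb ξ) * deriv (⇑fb) ξ) 2 volume := by
    have ha0 : ENNReal.ofReal C ≠ 0 := by
      simp [ENNReal.ofReal_eq_zero, not_le, hC0]
    rw [ENNReal.mul_iInf_of_ne ha0 ENNReal.ofReal_ne_top]
    exact iInf_congr fun fb => ENNReal.mul_iInf_of_ne ha0 ENNReal.ofReal_ne_top
  rw [h2]
  exact le_iInf₂ key
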